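/- Fix an integer k ≥ 1, a real z ≥ 1, and reals ζ₁, ζ₂ ≥ 1. There exist constants γ₁, γ₂ ≥ 1 depending only on z, ζ₁, ζ₂ such that for every instance of the constrained-clustering setup (with S, Q, Ψ, π_Q, n_b, n_a as in the setup), if n_b ≥ n_a, then Cost(X,S) ≤ γ₁ · (Ψ + n_b · r^z) ≤ γ₁ · γ₂ · Cost(X,S). -/
import Mathlib
open scoped BigOperators Classical

/-- `dSet x C` is the distance from the point `x` to the finite set `C`. -/
noncomputable def dSet {d : ℕ} (x : EuclideanSpace ℝ (Fin d))
    (C : Finset (EuclideanSpace ℝ (Fin d))) : ℝ :=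
  sInf ((fun c => dist x c) '' (C : Set (EuclideanSpace ℝ (Fin d))))

/-- `kzCost z X C = Σ_{x ∈ X} dist(x,C)^z`. -/
noncomputable def kzCost {d : ℕ} (z : ℝ) (X C : Finset (EuclideanSpace ℝ (Fin d))) : ℝ :=
  ∑ x ∈ X, dSet x C ^ z

lemma dSet_nonneg {d : ℕ} (x : EuclideanSpace ℝ (Fin d)) (C : Finset (EuclideanSpace ℝ (Fin d))) :
    0 ≤ dSet x C := by
  rcases C.eq_empty_or_nonempty with h | ⟨c, hc⟩
  · simp [dSet, h, Real.sInf_empty]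
  · exact le_csInf ⟨_, c, hc, rfl⟩ (by rintro b ⟨c', _, rfl⟩; exact dist_nonneg)

lemma dSet_le {d : ℕ} (x c : EuclideanSpace ℝ (Fin d)) (C : Finset (EuclideanSpace ℝ (Fin d)))
    (hc : c ∈ C) : dSet x C ≤ dist x c :=
  csInf_le ((C.finite_toSet.image _).bddBelow) ⟨c, hc, rfl⟩

lemma dSet_exists {d : ℕ} (x : EuclideanSpace ℝ (Fin d)) (C : Finset (EuclideanSpace ℝ (Fin d)))
    (hC : C.Nonempty) : ∃ c ∈ C, dSet x C = dist x c := by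
  obtain ⟨c₀, hc₀⟩ := hC
  have h := Set.Nonempty.csInf_mem (s := (fun c => dist x c) '' (C : Set _)) ⟨_, c₀, hc₀, rfl⟩
    (C.finite_toSet.image _)
  obtain ⟨c, hc, h⟩ := h
  exact ⟨c, hc, h.symm⟩

lemma add_rpow_le {a b z : ℝ} (ha : 0 ≤ a) (hb : 0 ≤ b) (hz : 0 ≤ z) :
    (a + b) ^ z ≤ 2 ^ z * (a ^ z + b ^ z) := by
  have hmax : a + b ≤ 2 * max a b := by
    rcases le_total a b with h | h
    · rw [max_eq_right h]; linarith
    · rw [max_eq_left h]; linarith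
  calc (a + b) ^ z ≤ (2 * max a b) ^ z :=
        Real.rpow_le_rpow (by linarith) hmax hz
    _ = 2 ^ z * (max a b) ^ z := Real.mul_rpow (by norm_num) (le_max_of_le_left ha)
    _ ≤ 2 ^ z * (a ^ z + b ^ z) := by
        apply mul_le_mul_of_nonneg_left _ (Real.rpow_nonneg (by norm_num) z)
        rcases le_total a b with h | h
        · rw [max_eq_right h]; linarith [Real.rpow_nonneg ha z]
        · rw [max_eq_left h]; linarith [Real.rpow_nonneg hb z]

lemma kzCost_nonneg {d : ℕ} (z : ℝ) (X C : Finset (EuclideanSpace ℝ (Fin d))) :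
    0 ≤ kzCost z X C :=
  Finset.sum_nonneg fun y _ => Real.rpow_nonneg (dSet_nonneg y C) z

set_option maxHeartbeats 1000000 in
/-- If the number `n_b` of points assigned to centers in `B_{r/2}(x)` is at least the
number `n_a` of points assigned to centers in the annulus `B_r(x) \ B_{r/2}(x)`, then
`Ψ + n_b · r^z` is a constant-factor approximation of the optimal constrained
`(k,z)`-medoids cost `Cost(X,S)`. -/
theorem constrained_estimate_ball
    (z ζ₁ ζ₂ : ℝ) (hz : 1 ≤ z) (hζ₁ : 1 ≤ ζ₁) (hζ₂ : 1 ≤ ζ₂) :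
    ∃ γ₁ γ₂ : ℝ, 1 ≤ γ₁ ∧ 1 ≤ γ₂ ∧
      ∀ (k d : ℕ), 1 ≤ k → 1 ≤ d →
        ∀ (X S Q : Finset (EuclideanSpace ℝ (Fin d))) (x p : EuclideanSpace ℝ (Fin d))
          (Ψ : ℝ) (π : EuclideanSpace ℝ (Fin d) → EuclideanSpace ℝ (Fin d)),
          k < X.card → x ∈ X → p ∈ X → 0 < dist x p →
          S ⊆ X → p ∈ S → S.card ≤ k → (∀ t ∈ S, dist x p ≤ dist t x) →
          (∀ T : Finset (EuclideanSpace ℝ (Fin d)), T ⊆ X → p ∈ T → T.card ≤ k →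
            (∀ t ∈ T, dist x p ≤ dist t x) → kzCost z X S ≤ kzCost z X T) →
          Q ⊆ X → p ∈ Q → Q.card ≤ k →
          (∀ T : Finset (EuclideanSpace ℝ (Fin d)), T ⊆ X → p ∈ T → T.card ≤ k →
            kzCost z X Q ≤ ζ₁ * kzCost z X T) →
          (1 / ζ₂) * kzCost z X Q ≤ Ψ → Ψ ≤ ζ₂ * kzCost z X Q →
          (∀ y ∈ X, π y ∈ Q ∧ dist y (π y) = dSet y Q) →
          (X.filter (fun y => dist x p / 2 < dist (π y) x ∧ dist (π y) x < dist x p)).card ≤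
            (X.filter (fun y => dist (π y) x ≤ dist x p / 2)).card →
          kzCost z X S ≤
              γ₁ * (Ψ + ((X.filter (fun y => dist (π y) x ≤ dist x p / 2)).card : ℝ)
                * dist x p ^ z) ∧
            γ₁ * (Ψ + ((X.filter (fun y => dist (π y) x ≤ dist x p / 2)).card : ℝ)
                * dist x p ^ z) ≤ γ₁ * γ₂ * kzCost z X S := by
  have hz0 : (0:ℝ) ≤ z := by linarith
  have h2z : (1:ℝ) ≤ 2 ^ z := Real.one_le_rpow (by norm_num) hz0
  have h4z : (1:ℝ) ≤ 4 ^ z := Real.one_le_rpow (by norm_num) hz0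
  have h24 : (2:ℝ) ^ z ≤ 4 ^ z := Real.rpow_le_rpow (by norm_num) (by norm_num) hz0
  have h44 : (4:ℝ) ^ z = 2 ^ z * 2 ^ z := by
    rw [← Real.mul_rpow (by norm_num) (by norm_num)]; norm_num
  refine ⟨2 * 4 ^ z * ζ₂, ζ₁ * ζ₂ + 4 ^ z * (ζ₁ + 1), by nlinarith, by nlinarith, ?_⟩
  intro k d hk hd X S Q x p Ψ π hkX hxX hpX hr hSX hpS hScard hSfar hSopt hQX hpQ hQcard
    hQapx hΨ₁ hΨ₂ hπ hba
  set r := dist x p with hrdef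
  set nb : ℕ := (X.filter (fun y => dist (π y) x ≤ r / 2)).card with hnbdef
  have hζ₂0 : (0:ℝ) < ζ₂ := by linarith
  have hCostS0 : 0 ≤ kzCost z X S := kzCost_nonneg z X S
  have hCostQ0 : 0 ≤ kzCost z X Q := kzCost_nonneg z X Q
  have hΨ0 : 0 ≤ Ψ := le_trans (by positivity) hΨ₁
  have hrz0 : 0 ≤ r ^ z := Real.rpow_nonneg dist_nonneg z
  have hQS : kzCost z X Q ≤ ζ₁ * kzCost z X S := hQapx S hSX hpS hScard
  have hQΨ : kzCost z X Q ≤ ζ₂ * Ψ := by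
    have h := mul_le_mul_of_nonneg_left hΨ₁ hζ₂0.le
    rw [← mul_assoc, mul_one_div, div_self hζ₂0.ne', one_mul] at h
    exact h
  -- Part A
  have partA : kzCost z X S ≤ (2 * 4 ^ z * ζ₂) * (Ψ + (nb : ℝ) * r ^ z) := by
    set T : Finset (EuclideanSpace ℝ (Fin d)) := Q.filter (fun q => r ≤ dist q x) with hTdef
    have hpT : p ∈ T := Finset.mem_filter.2 ⟨hpQ, by rw [dist_comm]⟩
    have hST : kzCost z X S ≤ kzCost z X T :=
      hSopt T ((Q.filter_subset _).trans hQX) hpT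
        (le_trans (Finset.card_filter_le _ _) hQcard)
        (fun t ht => (Finset.mem_filter.1 ht).2)
    have hpoint : ∀ y ∈ X, dSet y T ^ z ≤
        2 ^ z * dSet y Q ^ z + (if dist (π y) x < r then 4 ^ z * r ^ z else 0) := by
      intro y hy
      obtain ⟨hπQ, hπd⟩ := hπ y hy
      by_cases hnear : dist (π y) x < r
      · rw [if_pos hnear]
        have h1 : dSet y T ≤ dSet y Q + 2 * r := by
          have hT : dSet y T ≤ dist y p := dSet_le y p T hpT
          have htri : dist y p ≤ dist y (π y) + dist (π y) x + dist x p :=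
            dist_triangle4 y (π y) x p
          rw [hπd] at htri
          linarith
        have h2 : dSet y T ^ z ≤ (dSet y Q + 2 * r) ^ z :=
          Real.rpow_le_rpow (dSet_nonneg y T) h1 hz0
        have h3 : (dSet y Q + 2 * r) ^ z ≤ 2 ^ z * (dSet y Q ^ z + (2 * r) ^ z) :=
          add_rpow_le (dSet_nonneg y Q) (by positivity) hz0
        have h4 : (2 * r : ℝ) ^ z = 2 ^ z * r ^ z := Real.mul_rpow (by norm_num) dist_nonneg
        rw [h4] at h3
        nlinarith [Real.rpow_nonneg (dSet_nonneg y Q) z]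
      · rw [if_neg hnear]
        have hπT : π y ∈ T := Finset.mem_filter.2 ⟨hπQ, not_lt.1 hnear⟩
        have hle : dSet y T ≤ dSet y Q := hπd ▸ dSet_le y (π y) T hπT
        have := Real.rpow_le_rpow (dSet_nonneg y T) hle hz0
        nlinarith [Real.rpow_nonneg (dSet_nonneg y Q) z]
    have hcount : ((X.filter (fun y => dist (π y) x < r)).card : ℝ) ≤ 2 * nb := by
      have hsub : X.filter (fun y => dist (π y) x < r) ⊆
          X.filter (fun y => dist (π y) x ≤ r / 2) ∪
          X.filter (fun y => r / 2 < dist (π y) x ∧ dist (π y) x < r) := by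
        intro y hy
        rw [Finset.mem_filter] at hy
        rcases le_or_gt (dist (π y) x) (r / 2) with h | h
        · exact Finset.mem_union_left _ (Finset.mem_filter.2 ⟨hy.1, h⟩)
        · exact Finset.mem_union_right _ (Finset.mem_filter.2 ⟨hy.1, h, hy.2⟩)
      have h1 := Finset.card_le_card hsub
      have h2 := Finset.card_union_le (X.filter (fun y => dist (π y) x ≤ r / 2))
        (X.filter (fun y => r / 2 < dist (π y) x ∧ dist (π y) x < r))
      have : (X.filter (fun y => dist (π y) x < r)).card ≤ nb + nb := by
        calc _ ≤ _ := h1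
          _ ≤ _ := h2
          _ ≤ nb + nb := by omega
      calc ((X.filter (fun y => dist (π y) x < r)).card : ℝ) ≤ ((nb + nb : ℕ) : ℝ) := by
            exact_mod_cast this
        _ = 2 * nb := by push_cast; ring
    have hsumT : kzCost z X T ≤ 2 ^ z * kzCost z X Q +
        ((X.filter (fun y => dist (π y) x < r)).card : ℝ) * (4 ^ z * r ^ z) := by
      calc kzCost z X T ≤ ∑ y ∈ X, (2 ^ z * dSet y Q ^ z +
            (if dist (π y) x < r then 4 ^ z * r ^ z else 0)) :=
            Finset.sum_le_sum hpoint
        _ = 2 ^ z * kzCost z X Q +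
            ∑ y ∈ X, (if dist (π y) x < r then 4 ^ z * r ^ z else 0) := by
            rw [Finset.sum_add_distrib, ← Finset.mul_sum]; rfl
        _ = 2 ^ z * kzCost z X Q +
            ((X.filter (fun y => dist (π y) x < r)).card : ℝ) * (4 ^ z * r ^ z) := by
            rw [← Finset.sum_filter, Finset.sum_const, nsmul_eq_mul]
    have hfinal : kzCost z X S ≤ 2 ^ z * (ζ₂ * Ψ) + 2 * (nb : ℝ) * (4 ^ z * r ^ z) := by
      have := mul_le_mul_of_nonneg_right hcount (by positivity : (0:ℝ) ≤ 4 ^ z * r ^ z)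
      nlinarith [mul_le_mul_of_nonneg_left hQΨ (by positivity : (0:ℝ) ≤ (2:ℝ) ^ z)]
    have hnbr : 0 ≤ (nb : ℝ) * r ^ z := by positivity
    have e1 : (2:ℝ) ^ z * ζ₂ ≤ 2 * 4 ^ z * ζ₂ := by nlinarith
    have e2 : (2:ℝ) * 4 ^ z ≤ 2 * 4 ^ z * ζ₂ := by nlinarith
    have f1 := mul_le_mul_of_nonneg_right e1 hΨ0
    have f2 := mul_le_mul_of_nonneg_right e2 hnbr
    nlinarith [f1, f2]
  refine ⟨partA, ?_⟩
  -- Part B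
  have hkey : ∀ y ∈ X, dist (π y) x ≤ r / 2 →
      (r / 4) ^ z ≤ dSet y Q ^ z + dSet y S ^ z := by
    intro y hy hnear
    obtain ⟨hπQ, hπd⟩ := hπ y hy
    obtain ⟨s, hs, hds⟩ := dSet_exists y S ⟨p, hpS⟩
    have hxs : r ≤ dist s x := hSfar s hs
    have htri : dist s x ≤ dist s y + dist y (π y) + dist (π y) x := dist_triangle4 s y (π y) x
    rw [dist_comm s y] at htri
    have hsum : r / 2 ≤ dSet y Q + dSet y S := by
      rw [hπd, ← hds] at htri
      linarith
    have hr4 : (0:ℝ) ≤ r / 4 := by linarith [dist_nonneg (x := x) (y := p)]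
    rcases le_total (r / 4) (dSet y Q) with h | h
    · have := Real.rpow_le_rpow hr4 h hz0
      linarith [Real.rpow_nonneg (dSet_nonneg y S) z]
    · have h' : r / 4 ≤ dSet y S := by linarith
      have := Real.rpow_le_rpow hr4 h' hz0
      linarith [Real.rpow_nonneg (dSet_nonneg y Q) z]
  have hnbB : (nb : ℝ) * (r / 4) ^ z ≤ kzCost z X Q + kzCost z X S := by
    have h1 : nb • ((r / 4) ^ z) ≤
        ∑ y ∈ X.filter (fun y => dist (π y) x ≤ r / 2), (dSet y Q ^ z + dSet y S ^ z) :=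
      Finset.card_nsmul_le_sum _ _ _
        (fun y hy => hkey y (Finset.mem_filter.1 hy).1 (Finset.mem_filter.1 hy).2)
    have h2 : ∑ y ∈ X.filter (fun y => dist (π y) x ≤ r / 2), (dSet y Q ^ z + dSet y S ^ z) ≤
        ∑ y ∈ X, (dSet y Q ^ z + dSet y S ^ z) :=
      Finset.sum_le_sum_of_subset_of_nonneg (Finset.filter_subset _ _)
        (fun y _ _ => add_nonneg (Real.rpow_nonneg (dSet_nonneg y Q) z)
          (Real.rpow_nonneg (dSet_nonneg y S) z))
    have h3 : ∑ y ∈ X, (dSet y Q ^ z + dSet y S ^ z) = kzCost z X Q + kzCost z X S := by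
      rw [Finset.sum_add_distrib]; rfl
    rw [nsmul_eq_mul] at h1
    linarith
  have hrsplit : r ^ z = 4 ^ z * (r / 4) ^ z := by
    have : r = 4 * (r / 4) := by ring
    rw [this, Real.mul_rpow (by norm_num) (by linarith [dist_nonneg (x := x) (y := p)])]
    ring_nf
  have hnbr : (nb : ℝ) * r ^ z ≤ 4 ^ z * (ζ₁ + 1) * kzCost z X S := by
    have h4pos : (0:ℝ) < 4 ^ z := by linarith
    calc (nb : ℝ) * r ^ z = 4 ^ z * ((nb : ℝ) * (r / 4) ^ z) := by rw [hrsplit]; ring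
      _ ≤ 4 ^ z * (kzCost z X Q + kzCost z X S) :=
          mul_le_mul_of_nonneg_left hnbB h4pos.le
      _ ≤ 4 ^ z * (ζ₁ + 1) * kzCost z X S := by nlinarith
  have hΨB : Ψ ≤ ζ₂ * ζ₁ * kzCost z X S := by
    calc Ψ ≤ ζ₂ * kzCost z X Q := hΨ₂
      _ ≤ ζ₂ * (ζ₁ * kzCost z X S) := mul_le_mul_of_nonneg_left hQS hζ₂0.le
      _ = ζ₂ * ζ₁ * kzCost z X S := by ring
  have hB : Ψ + (nb : ℝ) * r ^ z ≤ (ζ₁ * ζ₂ + 4 ^ z * (ζ₁ + 1)) * kzCost z X S := by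
    nlinarith
  calc (2 * 4 ^ z * ζ₂) * (Ψ + (nb : ℝ) * r ^ z)
      ≤ (2 * 4 ^ z * ζ₂) * ((ζ₁ * ζ₂ + 4 ^ z * (ζ₁ + 1)) * kzCost z X S) :=
        mul_le_mul_of_nonneg_left hB (by positivity)
    _ = (2 * 4 ^ z * ζ₂) * (ζ₁ * ζ₂ + 4 ^ z * (ζ₁ + 1)) * kzCost z X S := by ring
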